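/- Let Ω ⊆ ℝ^d be measurable with Lebesgue measure. Let ψ : Ω → ℂ be differentiable with gradient ∇ψ, and let A : Ω → ℝ^d be measurable. Assume ∇ψ ∈ L²(Ω; ℂ^d), ψ ∈ L²(Ω) ∩ L⁶(Ω), ‖A‖_{L⁶} < ∞, and let S ≥ 0 satisfy ‖ψ‖_{L⁶} ≤ S·‖∇ψ‖_{L²}. Then the coercivity lower bound holds: ‖ i∇ψ + ψA ‖²_{L²} + S²·‖A‖⁴_{L⁶}·‖ψ‖²_{L²} ≥ (9/32)·‖∇ψ‖²_{L²}. -/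

import Mathlib

open Complex MeasureTheory

noncomputable section

/-- The `j`-th component of the gradient of `f` on `Ω` (from the Fréchet derivative). -/
def gradW {d : ℕ} (Ω : Set (EuclideanSpace ℝ (Fin d)))
    (f : EuclideanSpace ℝ (Fin d) → ℂ) (x : EuclideanSpace ℝ (Fin d)) (j : Fin d) : ℂ :=
  fderivWithin ℝ f Ω x (EuclideanSpace.single j 1)

section Aux2

section Aux
variable {α : Type*} [MeasurableSpace α] {μ : Measure α}

lemma holder_int {p q : ℝ} (hpq : Real.HolderConjugate p q) {u v : α → ℝ}
    (hu : ∀ x, 0 ≤ u x) (hv : ∀ x, 0 ≤ v x)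
    (hum : AEMeasurable u μ) (hvm : AEMeasurable v μ)
    (hup : Integrable (fun x => u x ^ p) μ) (hvq : Integrable (fun x => v x ^ q) μ)
    (huv : Integrable (fun x => u x * v x) μ) :
    ∫ x, u x * v x ∂μ ≤ (∫ x, u x ^ p ∂μ) ^ (1/p) * (∫ x, v x ^ q ∂μ) ^ (1/q) := by
  have hUm : AEMeasurable (fun x => ENNReal.ofReal (u x)) μ :=
    ENNReal.measurable_ofReal.comp_aemeasurable hum
  have hVm : AEMeasurable (fun x => ENNReal.ofReal (v x)) μ :=
    ENNReal.measurable_ofReal.comp_aemeasurable hvm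
  have key := ENNReal.lintegral_mul_le_Lp_mul_Lq μ hpq hUm hVm
  have h1 : ENNReal.ofReal (∫ x, u x * v x ∂μ)
      = ∫⁻ x, ((fun x => ENNReal.ofReal (u x)) * fun x => ENNReal.ofReal (v x)) x ∂μ := by
    rw [MeasureTheory.ofReal_integral_eq_lintegral_ofReal huv
      (Filter.Eventually.of_forall fun x => mul_nonneg (hu x) (hv x))]
    exact lintegral_congr fun x => ENNReal.ofReal_mul (hu x)
  have h2 : ∫⁻ x, ENNReal.ofReal (u x) ^ p ∂μ = ENNReal.ofReal (∫ x, u x ^ p ∂μ) := by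
    rw [MeasureTheory.ofReal_integral_eq_lintegral_ofReal hup
      (Filter.Eventually.of_forall fun x => Real.rpow_nonneg (hu x) p)]
    exact lintegral_congr fun x => ENNReal.ofReal_rpow_of_nonneg (hu x) hpq.nonneg
  have h3 : ∫⁻ x, ENNReal.ofReal (v x) ^ q ∂μ = ENNReal.ofReal (∫ x, v x ^ q ∂μ) := by
    rw [MeasureTheory.ofReal_integral_eq_lintegral_ofReal hvq
      (Filter.Eventually.of_forall fun x => Real.rpow_nonneg (hv x) q)]
    exact lintegral_congr fun x => ENNReal.ofReal_rpow_of_nonneg (hv x) hpq.symm.nonneg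
  rw [h2, h3, ← h1] at key
  have hne : ENNReal.ofReal (∫ x, u x ^ p ∂μ) ^ (1/p) * ENNReal.ofReal (∫ x, v x ^ q ∂μ) ^ (1/q) ≠ ⊤ :=
    ENNReal.mul_ne_top
      (ENNReal.rpow_ne_top_of_nonneg (one_div_nonneg.mpr hpq.nonneg) ENNReal.ofReal_ne_top)
      (ENNReal.rpow_ne_top_of_nonneg (one_div_nonneg.mpr hpq.symm.nonneg) ENNReal.ofReal_ne_top)
  have := ENNReal.toReal_mono hne key
  rwa [ENNReal.toReal_ofReal (integral_nonneg fun x => mul_nonneg (hu x) (hv x)),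
    ENNReal.toReal_mul, ← ENNReal.toReal_rpow, ← ENNReal.toReal_rpow,
    ENNReal.toReal_ofReal (integral_nonneg fun x => Real.rpow_nonneg (hu x) p),
    ENNReal.toReal_ofReal (integral_nonneg fun x => Real.rpow_nonneg (hv x) q)] at this

lemma arith_final {F G H K : ℝ} (hF : 0 ≤ F) (hG : 0 ≤ G) (hH : 0 ≤ H) (hK : 0 ≤ K)
    (h1 : (G - H) ^ 2 ≤ F ^ 2) (h2 : H ^ 2 ≤ K * G) :
    9 / 32 * G ^ 2 ≤ F ^ 2 + K ^ 2 := by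
  have hH' : H ≤ K + G / 4 := by nlinarith [sq_nonneg (K - G / 4)]
  have hGF : G - H ≤ F := by nlinarith [sq_nonneg (F - (G - H)), sq_nonneg (F + (G - H))]
  nlinarith [sq_nonneg (F - K), sq_nonneg (F + K - 3 / 4 * G), sq_nonneg (F + K)]

lemma pt_P1 {u t : ℝ} (hu : 0 ≤ u) (ht : 0 ≤ t) : u ^ 2 * t ^ 2 ≤ u ^ 6 + t ^ 2 + t ^ 6 := by
  nlinarith [mul_nonneg (sq_nonneg (u ^ 2 - t)) (by positivity : (0:ℝ) ≤ u ^ 2 + 2 * t),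
    mul_nonneg (sq_nonneg t) (sq_nonneg (t ^ 2 - 1 / 2)),
    mul_nonneg (sq_nonneg t) (sq_nonneg (t - 1 / 2)), sq_nonneg t,
    pow_nonneg hu 6, pow_nonneg ht 6, pow_nonneg ht 2]

lemma pt_P2 {u t : ℝ} (hu : 0 ≤ u) (ht : 0 ≤ t) : u ^ 4 * t ^ 2 ≤ u ^ 6 + t ^ 6 := by
  nlinarith [mul_nonneg (sq_nonneg (u ^ 2 - t ^ 2)) (by positivity : (0:ℝ) ≤ 2 * u ^ 2 + t ^ 2),
    pow_nonneg hu 6, pow_nonneg ht 6]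

lemma rpow_aux1 {t : ℝ} (ht : 0 ≤ t) : (t ^ 4) ^ ((3:ℝ)/2) = t ^ 6 := by
  rw [← Real.rpow_natCast t 4, ← Real.rpow_mul ht,
    show ((4:ℕ):ℝ) * ((3:ℝ)/2) = ((6:ℕ):ℝ) by norm_num, Real.rpow_natCast]

lemma rpow_aux2 {t : ℝ} (ht : 0 ≤ t) : (t ^ 2) ^ ((3:ℝ)) = t ^ 6 := by
  rw [← Real.rpow_natCast t 2, ← Real.rpow_mul ht,
    show ((2:ℕ):ℝ) * (3:ℝ) = ((6:ℕ):ℝ) by norm_num, Real.rpow_natCast]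

lemma rpow_aux3 (t : ℝ) : t ^ ((2:ℝ)) = t ^ 2 := by
  rw [show ((2:ℝ)) = ((2:ℕ):ℝ) by norm_num, Real.rpow_natCast]

lemma coercivity_abstract (μ : Measure α) (F G φ a : α → ℝ)
    (hF0 : ∀ x, 0 ≤ F x) (hG0 : ∀ x, 0 ≤ G x) (hφ0 : ∀ x, 0 ≤ φ x) (ha0 : ∀ x, 0 ≤ a x)
    (hFm : AEMeasurable F μ) (hGm : AEMeasurable G μ) (hφm : AEMeasurable φ μ)
    (ham : AEMeasurable a μ)
    (htri1 : ∀ x, |F x - G x| ≤ φ x * a x) (htri2 : ∀ x, |G x - φ x * a x| ≤ F x)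
    (hG2 : Integrable (fun x => G x ^ 2) μ)
    (hφ2 : Integrable (fun x => φ x ^ 2) μ)
    (hφ6 : Integrable (fun x => φ x ^ 6) μ)
    (ha6 : Integrable (fun x => a x ^ 6) μ)
    (S : ℝ) (hS : 0 ≤ S)
    (hSob : (∫ x, φ x ^ 6 ∂μ) ^ ((1:ℝ)/6) ≤ S * (∫ x, G x ^ 2 ∂μ) ^ ((1:ℝ)/2)) :
    9/32 * ∫ x, G x ^ 2 ∂μ
      ≤ (∫ x, F x ^ 2 ∂μ) + S ^ 2 * ((∫ x, a x ^ 6 ∂μ) ^ ((1:ℝ)/6)) ^ 4 * ∫ x, φ x ^ 2 ∂μ := by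
  have hIG0 : 0 ≤ ∫ x, G x ^ 2 ∂μ := integral_nonneg fun x => sq_nonneg _
  have hIF0 : 0 ≤ ∫ x, F x ^ 2 ∂μ := integral_nonneg fun x => sq_nonneg _
  have hZ0 : 0 ≤ ∫ x, φ x ^ 2 ∂μ := integral_nonneg fun x => sq_nonneg _
  have hX0 : 0 ≤ ∫ x, a x ^ 6 ∂μ := integral_nonneg fun x => by positivity
  have hY0 : 0 ≤ ∫ x, φ x ^ 6 ∂μ := integral_nonneg fun x => by positivity
  -- integrability of (φ a)^2
  have hh2int : Integrable (fun x => (φ x * a x) ^ 2) μ := by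
    refine Integrable.mono' (ha6.add (hφ2.add hφ6))
      (((hφm.mul ham).pow_const 2).aestronglyMeasurable)
      (Filter.Eventually.of_forall fun x => ?_)
    simp only [Pi.add_apply, Real.norm_eq_abs]
    rw [_root_.abs_of_nonneg (by positivity)]
    nlinarith [pt_P1 (ha0 x) (hφ0 x)]
  have hIH0 : 0 ≤ ∫ x, (φ x * a x) ^ 2 ∂μ := integral_nonneg fun x => sq_nonneg _
  -- integrability of F^2
  have hF2 : Integrable (fun x => F x ^ 2) μ := by
    refine Integrable.mono' ((hG2.const_mul 2).add (hh2int.const_mul 2))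
      ((hFm.pow_const 2).aestronglyMeasurable) (Filter.Eventually.of_forall fun x => ?_)
    simp only [Pi.add_apply, Real.norm_eq_abs]
    rw [_root_.abs_of_nonneg (sq_nonneg _)]
    have h1 := (abs_le.mp (htri1 x)).2
    have e1 : 0 ≤ G x + φ x * a x - F x := by linarith
    have e2 : 0 ≤ F x + G x + φ x * a x :=
      add_nonneg (add_nonneg (hF0 x) (hG0 x)) (mul_nonneg (hφ0 x) (ha0 x))
    nlinarith [mul_nonneg e1 e2, sq_nonneg (G x - φ x * a x)]
  -- integrability of G * (φ a)
  have hGhint : Integrable (fun x => G x * (φ x * a x)) μ := by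
    refine Integrable.mono' (hG2.add hh2int)
      ((hGm.mul (hφm.mul ham)).aestronglyMeasurable)
      (Filter.Eventually.of_forall fun x => ?_)
    simp only [Pi.add_apply, Real.norm_eq_abs]
    rw [_root_.abs_of_nonneg (mul_nonneg (hG0 x) (mul_nonneg (hφ0 x) (ha0 x)))]
    nlinarith [sq_nonneg (G x - φ x * a x), mul_nonneg (hG0 x) (mul_nonneg (hφ0 x) (ha0 x))]
  -- integrability of a^4 φ^2
  have ha4φ2int : Integrable (fun x => a x ^ 4 * φ x ^ 2) μ := by
    refine Integrable.mono' (ha6.add hφ6)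
      (((ham.pow_const 4).mul (hφm.pow_const 2)).aestronglyMeasurable)
      (Filter.Eventually.of_forall fun x => ?_)
    simp only [Pi.add_apply, Real.norm_eq_abs]
    rw [_root_.abs_of_nonneg (by positivity)]
    exact pt_P2 (ha0 x) (hφ0 x)
  -- Hölder with p = 3/2, q = 3 : ∫ a⁴φ² ≤ X^{2/3} Y^{1/3}
  have hpq32 : Real.HolderConjugate (3/2) 3 := ⟨by norm_num, by norm_num, by norm_num⟩
  have happ2b := holder_int hpq32 (u := fun x => a x ^ 4) (v := fun x => φ x ^ 2)
    (fun x => pow_nonneg (ha0 x) 4) (fun x => sq_nonneg (φ x))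
    (ham.pow_const 4) (hφm.pow_const 2)
    (ha6.congr (Filter.Eventually.of_forall fun x => (rpow_aux1 (ha0 x)).symm))
    (hφ6.congr (Filter.Eventually.of_forall fun x => (rpow_aux2 (hφ0 x)).symm))
    ha4φ2int
  rw [integral_congr_ae (Filter.Eventually.of_forall fun x => rpow_aux1 (ha0 x)),
    integral_congr_ae (Filter.Eventually.of_forall fun x => rpow_aux2 (hφ0 x)),
    show (1:ℝ)/(3/2) = 2/3 by norm_num] at happ2b
  -- Cauchy–Schwarz : ∫ (a²φ)·φ ≤ (∫ a⁴φ²)^{1/2} (∫ φ²)^{1/2}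
  have hpq22 : Real.HolderConjugate 2 2 := ⟨by norm_num, by norm_num, by norm_num⟩
  have happ2a := holder_int hpq22 (u := fun x => a x ^ 2 * φ x) (v := φ)
    (fun x => mul_nonneg (sq_nonneg (a x)) (hφ0 x)) hφ0
    ((ham.pow_const 2).mul hφm) hφm
    (ha4φ2int.congr (Filter.Eventually.of_forall fun x => by
      show a x ^ 4 * φ x ^ 2 = (a x ^ 2 * φ x) ^ ((2:ℝ))
      rw [rpow_aux3]; ring))
    (hφ2.congr (Filter.Eventually.of_forall fun x => (rpow_aux3 (φ x)).symm))
    (hh2int.congr (Filter.Eventually.of_forall fun x => by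
      show (φ x * a x) ^ 2 = (a x ^ 2 * φ x) * φ x
      ring))
  rw [integral_congr_ae (Filter.Eventually.of_forall
      (fun x => by rw [rpow_aux3]; ring : ∀ x, (a x ^ 2 * φ x) ^ ((2:ℝ)) = a x ^ 4 * φ x ^ 2)),
    integral_congr_ae (Filter.Eventually.of_forall fun x => rpow_aux3 (φ x)),
    integral_congr_ae (Filter.Eventually.of_forall
      (fun x => by ring : ∀ x, (a x ^ 2 * φ x) * φ x = (φ x * a x) ^ 2))] at happ2a
  beta_reduce at happ2a happ2b
  -- Cauchy–Schwarz : ∫ G (φ a) ≤ (∫ G²)^{1/2} (∫ (φa)²)^{1/2}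
  have happ0 := holder_int hpq22 (u := G) (v := fun x => φ x * a x)
    hG0 (fun x => mul_nonneg (hφ0 x) (ha0 x))
    hGm (hφm.mul ham)
    (hG2.congr (Filter.Eventually.of_forall fun x => (rpow_aux3 (G x)).symm))
    (hh2int.congr (Filter.Eventually.of_forall fun x => (rpow_aux3 (φ x * a x)).symm))
    hGhint
  rw [integral_congr_ae (Filter.Eventually.of_forall fun x => rpow_aux3 (G x)),
    integral_congr_ae (Filter.Eventually.of_forall fun x => rpow_aux3 (φ x * a x))] at happ0
  beta_reduce at happ0
  -- abbreviations
  set IG := ∫ x, G x ^ 2 ∂μ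
  set IF := ∫ x, F x ^ 2 ∂μ
  set Z := ∫ x, φ x ^ 2 ∂μ
  set X := ∫ x, a x ^ 6 ∂μ
  set Y := ∫ x, φ x ^ 6 ∂μ
  set IH := ∫ x, (φ x * a x) ^ 2 ∂μ
  set W := ∫ x, a x ^ 4 * φ x ^ 2 ∂μ
  have hW0 : 0 ≤ W := integral_nonneg fun x => by positivity
  -- convert rpow 1/2 into sqrt
  simp only [← Real.sqrt_eq_rpow] at happ2a happ0 hSob
  -- c4 : sqrt W ≤ X^{1/3} Y^{1/6}
  have c4 : Real.sqrt W ≤ X ^ ((1:ℝ)/3) * Y ^ ((1:ℝ)/6) := by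
    rw [Real.sqrt_eq_rpow]
    calc W ^ ((1:ℝ)/2) ≤ (X ^ ((2:ℝ)/3) * Y ^ ((1:ℝ)/3)) ^ ((1:ℝ)/2) :=
          Real.rpow_le_rpow hW0 happ2b (by norm_num)
      _ = X ^ ((1:ℝ)/3) * Y ^ ((1:ℝ)/6) := by
          rw [Real.mul_rpow (Real.rpow_nonneg hX0 _) (Real.rpow_nonneg hY0 _),
            ← Real.rpow_mul hX0, ← Real.rpow_mul hY0]
          norm_num
  -- c7 : IH ≤ K * sqrt IG with K := S * (X^{1/6})^2 * sqrt Z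
  have hXsq : (X ^ ((1:ℝ)/6)) ^ 2 = X ^ ((1:ℝ)/3) := by
    rw [← Real.rpow_natCast (X ^ ((1:ℝ)/6)) 2, ← Real.rpow_mul hX0]
    norm_num
  have c7 : IH ≤ (S * (X ^ ((1:ℝ)/6)) ^ 2 * Real.sqrt Z) * Real.sqrt IG := by
    calc IH ≤ Real.sqrt W * Real.sqrt Z := happ2a
      _ ≤ (X ^ ((1:ℝ)/3) * Y ^ ((1:ℝ)/6)) * Real.sqrt Z :=
          mul_le_mul_of_nonneg_right c4 (Real.sqrt_nonneg _)
      _ ≤ (X ^ ((1:ℝ)/3) * (S * Real.sqrt IG)) * Real.sqrt Z := by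
          have := mul_le_mul_of_nonneg_left hSob (Real.rpow_nonneg hX0 ((1:ℝ)/3))
          exact mul_le_mul_of_nonneg_right this (Real.sqrt_nonneg _)
      _ = (S * (X ^ ((1:ℝ)/6)) ^ 2 * Real.sqrt Z) * Real.sqrt IG := by
          rw [hXsq]; ring
  -- c8 : (sqrt IG - sqrt IH)² ≤ IF
  have hexp : ∫ x, (G x - φ x * a x) ^ 2 ∂μ = IG - 2 * ∫ x, G x * (φ x * a x) ∂μ + IH := by
    have h1 : (fun x => (G x - φ x * a x) ^ 2)
        = fun x => (G x ^ 2 - 2 * (G x * (φ x * a x))) + (φ x * a x) ^ 2 := by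
      funext x; ring
    have hsub : Integrable (fun x => G x ^ 2 - 2 * (G x * (φ x * a x))) μ :=
      hG2.sub (hGhint.const_mul 2)
    rw [h1, integral_add hsub hh2int, integral_sub hG2 (hGhint.const_mul 2), integral_const_mul]
  have hmono : ∫ x, (G x - φ x * a x) ^ 2 ∂μ ≤ IF := by
    refine integral_mono_of_nonneg (Filter.Eventually.of_forall fun x => sq_nonneg _) hF2
      (Filter.Eventually.of_forall fun x => ?_)
    have h := htri2 x
    calc (G x - φ x * a x) ^ 2 = |G x - φ x * a x| ^ 2 := (_root_.sq_abs _).symm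
      _ ≤ F x ^ 2 := by
          have := pow_le_pow_left₀ (abs_nonneg _) h 2
          simpa using this
  have c8 : (Real.sqrt IG - Real.sqrt IH) ^ 2 ≤ IF := by
    have hexpand : (Real.sqrt IG - Real.sqrt IH) ^ 2
        = IG - 2 * (Real.sqrt IG * Real.sqrt IH) + IH := by
      rw [sub_sq, Real.sq_sqrt hIG0, Real.sq_sqrt hIH0]; ring
    rw [hexpand]
    linarith [hexp ▸ hmono, happ0]
  -- final arithmetic
  have hK0 : 0 ≤ S * (X ^ ((1:ℝ)/6)) ^ 2 * Real.sqrt Z :=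
    mul_nonneg (mul_nonneg hS (sq_nonneg _)) (Real.sqrt_nonneg _)
  have main := arith_final (Real.sqrt_nonneg IF) (Real.sqrt_nonneg IG) (Real.sqrt_nonneg IH)
    hK0 (by rw [Real.sq_sqrt hIF0]; exact c8)
    (by rw [Real.sq_sqrt hIH0]; exact c7)
  rw [Real.sq_sqrt hIF0, Real.sq_sqrt hIG0] at main
  have hKsq : (S * (X ^ ((1:ℝ)/6)) ^ 2 * Real.sqrt Z) ^ 2
      = S ^ 2 * (X ^ ((1:ℝ)/6)) ^ 4 * Z := by
    rw [mul_pow, mul_pow, ← pow_mul, Real.sq_sqrt hZ0]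
  rw [hKsq] at main
  linarith

end Aux


lemma euclid_norm_eq {d : ℕ} (c : Fin d → ℂ) :
    ‖(WithLp.equiv 2 (Fin d → ℂ)).symm c‖ = Real.sqrt (∑ j, Complex.normSq (c j)) := by
  rw [EuclideanSpace.norm_eq]
  congr 1
  exact Finset.sum_congr rfl fun j _ => by
    simp [Complex.sq_norm]

lemma tri_ineq {d : ℕ} (z : ℂ) (u : Fin d → ℂ) (B : Fin d → ℝ) :
    |Real.sqrt (∑ j, Complex.normSq (Complex.I * u j + z * (B j : ℂ)))
        - Real.sqrt (∑ j, Complex.normSq (u j))| ≤ ‖z‖ * Real.sqrt (∑ j, (B j) ^ 2)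
    ∧ |Real.sqrt (∑ j, Complex.normSq (u j))
        - ‖z‖ * Real.sqrt (∑ j, (B j) ^ 2)|
        ≤ Real.sqrt (∑ j, Complex.normSq (Complex.I * u j + z * (B j : ℂ))) := by
  classical
  set V : EuclideanSpace ℂ (Fin d) :=
    (WithLp.equiv 2 (Fin d → ℂ)).symm (fun j => Complex.I * u j + z * (B j : ℂ)) with hV
  set U : EuclideanSpace ℂ (Fin d) :=
    (WithLp.equiv 2 (Fin d → ℂ)).symm (fun j => Complex.I * u j) with hU
  set W : EuclideanSpace ℂ (Fin d) :=
    (WithLp.equiv 2 (Fin d → ℂ)).symm (fun j => z * (B j : ℂ)) with hW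
  have hVW : V - U = W := by
    ext j
    simp [hV, hU, hW, WithLp.equiv_symm_apply, PiLp.toLp_apply]
  have hnV : ‖V‖ = Real.sqrt (∑ j, Complex.normSq (Complex.I * u j + z * (B j : ℂ))) :=
    euclid_norm_eq _
  have hnU : ‖U‖ = Real.sqrt (∑ j, Complex.normSq (u j)) := by
    rw [euclid_norm_eq]
    congr 1
    exact Finset.sum_congr rfl fun j _ => by simp [Complex.normSq_mul]
  have hnW : ‖W‖ = ‖z‖ * Real.sqrt (∑ j, (B j) ^ 2) := by
    rw [euclid_norm_eq]
    have : ∀ j : Fin d, Complex.normSq (z * (B j : ℂ)) = Complex.normSq z * (B j) ^ 2 := by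
      intro j
      rw [Complex.normSq_mul, Complex.normSq_ofReal]
      ring
    rw [Finset.sum_congr rfl fun j _ => this j, ← Finset.mul_sum,
      Real.sqrt_mul (Complex.normSq_nonneg z), Complex.norm_def]
  constructor
  · have h := abs_norm_sub_norm_le V U
    rw [hVW, hnV, hnU, hnW] at h
    exact h
  · have hUW : U + W = V := by
      ext j
      simp [hV, hU, hW, WithLp.equiv_symm_apply, PiLp.toLp_apply]
    have h := abs_norm_sub_norm_le U (-W)
    rw [norm_neg, sub_neg_eq_add, hUW, hnU, hnW, hnV] at h
    exact h


lemma gradW_aemeasurable {d : ℕ} {Ω : Set (EuclideanSpace ℝ (Fin d))} (hΩ : MeasurableSet Ω)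
    {ψ : EuclideanSpace ℝ (Fin d) → ℂ} (hψd : DifferentiableOn ℝ ψ Ω) (j : Fin d) :
    AEMeasurable (fun x => gradW Ω ψ x j) (volume.restrict Ω) := by
  have hD : ∀ x ∈ Ω, HasFDerivWithinAt ψ (fderivWithin ℝ ψ Ω x) Ω x :=
    fun x hx => (hψd x hx).hasFDerivWithinAt
  have key : ∀ T : ℂ →L[ℝ] ℝ,
      AEMeasurable (fun x => T (gradW Ω ψ x j)) (volume.restrict Ω) := by
    intro T
    set L : ℂ →L[ℝ] EuclideanSpace ℝ (Fin d) :=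
      (ContinuousLinearMap.toSpanSingleton ℝ (EuclideanSpace.single j (1:ℝ))).comp T with hL
    have h1 : ∀ x ∈ Ω, HasFDerivWithinAt (fun y => L (ψ y))
        (L.comp (fderivWithin ℝ ψ Ω x)) Ω x :=
      fun x hx => L.hasFDerivAt.comp_hasFDerivWithinAt x (hD x hx)
    have h2 : AEMeasurable (fun x => L.comp (fderivWithin ℝ ψ Ω x)) (volume.restrict Ω) :=
      aemeasurable_fderivWithin volume hΩ h1
    have h3 : AEMeasurable
        (fun x => (L.comp (fderivWithin ℝ ψ Ω x)) (EuclideanSpace.single j (1:ℝ)))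
        (volume.restrict Ω) :=
      (ContinuousLinearMap.apply ℝ (EuclideanSpace ℝ (Fin d))
        (EuclideanSpace.single j (1:ℝ))).continuous.measurable.comp_aemeasurable h2
    have h4 : AEMeasurable
        (fun x => ((L.comp (fderivWithin ℝ ψ Ω x)) (EuclideanSpace.single j (1:ℝ))) j)
        (volume.restrict Ω) :=
      (EuclideanSpace.proj j).continuous.measurable.comp_aemeasurable h3
    have heq : (fun x => ((L.comp (fderivWithin ℝ ψ Ω x)) (EuclideanSpace.single j (1:ℝ))) j)
        = fun x => T (gradW Ω ψ x j) := by
      funext x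
      simp [hL, gradW, ContinuousLinearMap.toSpanSingleton_apply,
        EuclideanSpace.single_apply]
    rwa [heq] at h4
  have hre := key Complex.reCLM
  have him := key Complex.imCLM
  have : (fun x => gradW Ω ψ x j)
      = fun x => (((gradW Ω ψ x j).re : ℂ) + ((gradW Ω ψ x j).im : ℂ) * Complex.I) :=
    funext fun x => (Complex.re_add_im _).symm
  rw [this]
  exact ((Complex.measurable_ofReal.comp_aemeasurable hre).add
    ((Complex.measurable_ofReal.comp_aemeasurable him).mul_const Complex.I))


end Aux2

/-- The coercivity lower bound (4.56)–(4.57):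
`‖i∇ψ + ψA‖²_{L²} + S²‖A‖⁴_{L⁶}‖ψ‖²_{L²} ≥ (9/32)‖∇ψ‖²_{L²}`,
where `S` is a Sobolev constant with `‖ψ‖_{L⁶} ≤ S‖∇ψ‖_{L²}`. -/
theorem stmt14 (d : ℕ) (Ω : Set (EuclideanSpace ℝ (Fin d))) (hΩ : MeasurableSet Ω)
    (ψ : EuclideanSpace ℝ (Fin d) → ℂ) (A : EuclideanSpace ℝ (Fin d) → Fin d → ℝ)
    (hψd : DifferentiableOn ℝ ψ Ω) (hA : Measurable A)
    (hGψ : Integrable (fun x => ∑ j, Complex.normSq (gradW Ω ψ x j)) (volume.restrict Ω))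
    (hψ2 : Integrable (fun x => Complex.normSq (ψ x)) (volume.restrict Ω))
    (hψ6 : Integrable (fun x => ‖ψ x‖ ^ (6 : ℕ)) (volume.restrict Ω))
    (hA6 : Integrable (fun x => Real.sqrt (∑ j, (A x j) ^ 2) ^ (6 : ℕ)) (volume.restrict Ω))
    (S : ℝ) (hS : 0 ≤ S)
    (hSob : (∫ x in Ω, ‖ψ x‖ ^ (6 : ℕ)) ^ ((1 : ℝ) / 6)
      ≤ S * (∫ x in Ω, ∑ j, Complex.normSq (gradW Ω ψ x j)) ^ ((1 : ℝ) / 2)) :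
    (∫ x in Ω, ∑ j, Complex.normSq (Complex.I * gradW Ω ψ x j + ψ x * (A x j : ℂ)))
        + S ^ (2 : ℕ)
          * ((∫ x in Ω, Real.sqrt (∑ j, (A x j) ^ 2) ^ (6 : ℕ)) ^ ((1 : ℝ) / 6)) ^ (4 : ℕ)
          * (∫ x in Ω, Complex.normSq (ψ x))
      ≥ (9 / 32) * ∫ x in Ω, ∑ j, Complex.normSq (gradW Ω ψ x j) := by
  classical
  have hsumf0 : ∀ x, (0:ℝ) ≤ ∑ j, Complex.normSq (Complex.I * gradW Ω ψ x j + ψ x * (A x j : ℂ)) :=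
    fun x => Finset.sum_nonneg fun j _ => Complex.normSq_nonneg _
  have hsumg0 : ∀ x, (0:ℝ) ≤ ∑ j, Complex.normSq (gradW Ω ψ x j) :=
    fun x => Finset.sum_nonneg fun j _ => Complex.normSq_nonneg _
  -- measurability facts
  have hψm : AEMeasurable ψ (volume.restrict Ω) := (hψd.continuousOn).aemeasurable hΩ
  have hgradm : ∀ j : Fin d, AEMeasurable (fun x => gradW Ω ψ x j) (volume.restrict Ω) :=
    fun j => gradW_aemeasurable hΩ hψd j
  have hAj : ∀ j : Fin d, Measurable fun x => A x j := fun j => (measurable_pi_apply j).comp hA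
  have hφm : AEMeasurable (fun x => ‖ψ x‖) (volume.restrict Ω) :=
    continuous_norm.measurable.comp_aemeasurable hψm
  have ham' : Measurable (fun x => Real.sqrt (∑ j, (A x j) ^ 2)) :=
    (Finset.measurable_sum Finset.univ fun j _ => ((hAj j).pow_const 2)).sqrt
  have hGm : AEMeasurable (fun x => Real.sqrt (∑ j, Complex.normSq (gradW Ω ψ x j)))
      (volume.restrict Ω) :=
    Real.continuous_sqrt.measurable.comp_aemeasurable
      (Finset.aemeasurable_fun_sum _ fun j _ =>
        Complex.continuous_normSq.measurable.comp_aemeasurable (hgradm j))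
  have hFm : AEMeasurable
      (fun x => Real.sqrt (∑ j, Complex.normSq (Complex.I * gradW Ω ψ x j + ψ x * (A x j : ℂ))))
      (volume.restrict Ω) :=
    Real.continuous_sqrt.measurable.comp_aemeasurable
      (Finset.aemeasurable_fun_sum _ fun j _ =>
        Complex.continuous_normSq.measurable.comp_aemeasurable
          ((aemeasurable_const.mul (hgradm j)).add
            (hψm.mul ((Complex.measurable_ofReal.comp (hAj j)).aemeasurable))))
  -- triangle inequalities
  have htri := fun x => tri_ineq (ψ x) (fun j => gradW Ω ψ x j) (fun j => A x j)
  -- rewrite the goal integrals as integrals of squares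
  have eIF : (∫ x in Ω, ∑ j, Complex.normSq (Complex.I * gradW Ω ψ x j + ψ x * (A x j : ℂ)))
      = ∫ x in Ω,
          (Real.sqrt (∑ j, Complex.normSq (Complex.I * gradW Ω ψ x j + ψ x * (A x j : ℂ)))) ^ 2 :=
    integral_congr_ae (Filter.Eventually.of_forall fun x => (Real.sq_sqrt (hsumf0 x)).symm)
  have eIG : (∫ x in Ω, ∑ j, Complex.normSq (gradW Ω ψ x j))
      = ∫ x in Ω, (Real.sqrt (∑ j, Complex.normSq (gradW Ω ψ x j))) ^ 2 :=
    integral_congr_ae (Filter.Eventually.of_forall fun x => (Real.sq_sqrt (hsumg0 x)).symm)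
  have eZ : (∫ x in Ω, Complex.normSq (ψ x)) = ∫ x in Ω, (‖ψ x‖) ^ 2 :=
    integral_congr_ae (Filter.Eventually.of_forall fun x => (Complex.sq_norm _).symm)
  rw [ge_iff_le, eIF, eIG, eZ]
  rw [eIG] at hSob
  exact coercivity_abstract (volume.restrict Ω)
    (fun x => Real.sqrt (∑ j, Complex.normSq (Complex.I * gradW Ω ψ x j + ψ x * (A x j : ℂ))))
    (fun x => Real.sqrt (∑ j, Complex.normSq (gradW Ω ψ x j)))
    (fun x => ‖ψ x‖)
    (fun x => Real.sqrt (∑ j, (A x j) ^ 2))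
    (fun x => Real.sqrt_nonneg _) (fun x => Real.sqrt_nonneg _)
    (fun x => norm_nonneg _) (fun x => Real.sqrt_nonneg _)
    hFm hGm hφm ham'.aemeasurable
    (fun x => (htri x).1) (fun x => (htri x).2)
    (hGψ.congr (Filter.Eventually.of_forall fun x => (Real.sq_sqrt (hsumg0 x)).symm))
    (hψ2.congr (Filter.Eventually.of_forall fun x => (Complex.sq_norm _).symm))
    hψ6 hA6 S hS hSob

end
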